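/- Let P be a finite nonempty collection of cells in ℤ² and let [a,b] and [α,β] be two inner intervals of P, with anti-diagonal corners c,d and γ,δ respectively, such that the corner sets {a,b,c,d} and {α,β,γ,δ} share exactly two elements. Then for every P-order <^P on V(P), the S-polynomial S(f_{a,b}, f_{α,β}) reduces to 0 modulo the set G of all inner 2-minors of P with respect to the lexicographic order <^P_lex. -/

import Mathlib

namespace ClosedPathPaper

open MvPolynomial

/-- Lattice points of `ℤ²`; a cell is identified with its lower left corner. -/
abbrev Pt : Type := ℤ × ℤ

/-- The four vertices (corners) of the unit cell with lower left corner `a`. -/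
def cellVerts (a : Pt) : Set Pt :=
  {a, (a.1 + 1, a.2), (a.1, a.2 + 1), (a.1 + 1, a.2 + 1)}

/-- The vertex set `V(P)` of a collection of cells `P`. -/
def VP (P : Finset Pt) : Set Pt := ⋃ a ∈ P, cellVerts a

/-- `[a,b]` is a proper interval and every cell contained in it belongs to `P`. -/
def IsInnerInterval (P : Finset Pt) (a b : Pt) : Prop :=
  a.1 < b.1 ∧ a.2 < b.2 ∧
    ∀ c : Pt, a.1 ≤ c.1 → c.1 < b.1 → a.2 ≤ c.2 → c.2 < b.2 → c ∈ P

/-- The four corners of the proper interval `[a,b]`: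
diagonal corners `a, b` and anti-diagonal corners `c = (a.1, b.2)`, `d = (b.1, a.2)`. -/
def cornersOf (a b : Pt) : Finset Pt := {a, b, (a.1, b.2), (b.1, a.2)}

/-- The inner 2-minor `f_{a,b} = x_a x_b - x_c x_d` attached to the inner interval `[a,b]`. -/
noncomputable def innerMinor (K : Type*) [Field K] (a b : Pt) : MvPolynomial Pt K :=
  X a * X b - X (a.1, b.2) * X (b.1, a.2)

/-- The set `G` of all inner 2-minors of `P`. -/
def minorsSet (K : Type*) [Field K] (P : Finset Pt) : Set (MvPolynomial Pt K) :=
  {f | ∃ a b : Pt, IsInnerInterval P a b ∧ f = innerMinor K a b}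

/-- The polyomino ideal `I_P`. -/
noncomputable def polyoIdeal (K : Type*) [Field K] (P : Finset Pt) :
    Ideal (MvPolynomial Pt K) :=
  Ideal.span (minorsSet K P)

/-! ### Monomial orders -/

/-- Strict lexicographic comparison of exponent vectors induced by the
(strict total) order `po` on the variables. -/
def lexLt (po : Pt → Pt → Prop) (u v : Pt →₀ ℕ) : Prop :=
  ∃ w : Pt, u w < v w ∧ ∀ w' : Pt, po w w' → u w' = v w'

def lexLe (po : Pt → Pt → Prop) (u v : Pt →₀ ℕ) : Prop := u = v ∨ lexLt po u v

/-- `m` is the leading monomial of `f` with respect to the lexicographic order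
induced by `po`. -/
def IsLM {K : Type*} [Field K] (po : Pt → Pt → Prop) (f : MvPolynomial Pt K)
    (m : Pt →₀ ℕ) : Prop :=
  m ∈ f.support ∧ ∀ m' ∈ f.support, lexLe po m' m

/-- `sp` is the S-polynomial of `f` and `g` with respect to the lexicographic
order induced by `po`. -/
def IsSPoly {K : Type*} [Field K] (po : Pt → Pt → Prop) (f g sp : MvPolynomial Pt K) : Prop :=
  ∃ mf mg : Pt →₀ ℕ, IsLM po f mf ∧ IsLM po g mg ∧
    sp = monomial (mf ⊔ mg - mf) (f.coeff mf)⁻¹ * f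
       - monomial (mf ⊔ mg - mg) (g.coeff mg)⁻¹ * g

/-- `h` has a standard expression with respect to `G`, i.e. `h` reduces to `0`
modulo `G` with respect to the lexicographic order induced by `po`. -/
def ReducesToZero {K : Type*} [Field K] (po : Pt → Pt → Prop)
    (G : Set (MvPolynomial Pt K)) (h : MvPolynomial Pt K) : Prop :=
  ∃ (F : Finset (MvPolynomial Pt K)) (q : MvPolynomial Pt K → MvPolynomial Pt K),
    ↑F ⊆ G ∧ h = ∑ g ∈ F, q g * g ∧
    ∀ g ∈ F, ∀ m, IsLM po (q g * g) m → ∃ mh, IsLM po h mh ∧ lexLe po m mh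

/-- The exponent vector of `x_u x_v x_w`. -/
noncomputable def mono3 (u v w : Pt) : Pt →₀ ℕ :=
  Finsupp.single u 1 + Finsupp.single v 1 + Finsupp.single w 1

/-- The leading monomials, viewed as polynomials, of the members of `G`. -/
def leadingMonomials {K : Type*} [Field K] (po : Pt → Pt → Prop)
    (G : Set (MvPolynomial Pt K)) : Set (MvPolynomial Pt K) :=
  {f | ∃ g ∈ G, ∃ m, IsLM po g m ∧ f = monomial m (1 : K)}

/-- The initial ideal of `I` with respect to the lexicographic order induced by `po`. -/
noncomputable def initialIdeal {K : Type*} [Field K] (po : Pt → Pt → Prop)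
    (I : Ideal (MvPolynomial Pt K)) : Ideal (MvPolynomial Pt K) :=
  Ideal.span (leadingMonomials po (I : Set (MvPolynomial Pt K)))

/-- `G` is a Gröbner basis of `I`. -/
def IsGroebnerBasis {K : Type*} [Field K] (po : Pt → Pt → Prop)
    (G : Set (MvPolynomial Pt K)) (I : Ideal (MvPolynomial Pt K)) : Prop :=
  Ideal.span G = I ∧ Ideal.span (leadingMonomials po G) = initialIdeal po I

/-- `G` is the reduced Gröbner basis of `I` (up to normalizing signs). -/
def IsReducedGroebnerBasis {K : Type*} [Field K] (po : Pt → Pt → Prop)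
    (G : Set (MvPolynomial Pt K)) (I : Ideal (MvPolynomial Pt K)) : Prop :=
  IsGroebnerBasis po G I ∧
  (∀ g ∈ G, ∃ m, IsLM po g m ∧ (g.coeff m = 1 ∨ g.coeff m = -1)) ∧
  (∀ g ∈ G, ∀ g' ∈ G, g' ≠ g → ∀ m ∈ g.support, ∀ m', IsLM po g' m' → ¬ m' ≤ m)

/-! ### Closed paths and special configurations -/

/-- Two cells share a common edge. -/
def cellAdj (a b : Pt) : Prop :=
  b = (a.1 + 1, a.2) ∨ b = (a.1 - 1, a.2) ∨ b = (a.1, a.2 + 1) ∨ b = (a.1, a.2 - 1)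

/-- `P` is a closed path polyomino. -/
def IsClosedPath (P : Finset Pt) : Prop :=
  ∃ n : ℕ, 5 < n ∧ ∃ A : ZMod n → Pt,
    Function.Injective A ∧
    (∀ i, cellAdj (A i) (A (i + 1))) ∧
    (∀ i j : ZMod n, j ≠ i - 2 → j ≠ i - 1 → j ≠ i → j ≠ i + 1 → j ≠ i + 2 →
      cellVerts (A i) ∩ cellVerts (A j) = ∅) ∧
    ∀ c : Pt, c ∈ P ↔ ∃ i, A i = c

/-- The horizontal block of rank `m` whose leftmost cell is `a`. -/
def hBlockCells (a : Pt) (m : ℕ) : Finset Pt :=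
  (Finset.range m).image fun t : ℕ => (a.1 + (t : ℤ), a.2)

/-- The vertical block of rank `m` whose bottom cell is `a`. -/
def vBlockCells (a : Pt) (m : ℕ) : Finset Pt :=
  (Finset.range m).image fun t : ℕ => (a.1, a.2 + (t : ℤ))

/-- The vertex set of a finite set of cells. -/
def vertsOfCells (s : Finset Pt) : Set Pt := ⋃ c ∈ s, cellVerts c

/-- A W-pentomino of `P`: a horizontal block of rank two with leftmost cell `a₁`, a
vertical block of rank two with bottom cell `a₂`, and a middle cell `A` not belonging to the
two blocks, such that the vertex sets of the two blocks meet exactly in the lower right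
corner of `A`. -/
def IsWPentomino (P : Finset Pt) (a₁ a₂ A : Pt) : Prop :=
  hBlockCells a₁ 2 ⊆ P ∧ vBlockCells a₂ 2 ⊆ P ∧ A ∈ P ∧
  A ∉ hBlockCells a₁ 2 ∪ vBlockCells a₂ 2 ∧
  vertsOfCells (hBlockCells a₁ 2) ∩ vertsOfCells (vBlockCells a₂ 2) = {(A.1 + 1, A.2)}

/-- An RW-heptomino of `P`: a horizontal block of rank three with leftmost cell `a₁`, a
vertical block of rank three with bottom cell `a₂`, and a middle cell `A` not belonging to
the two blocks, such that the vertex sets of the two blocks meet exactly in the upper left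
corner of `A`. -/
def IsRWHeptomino (P : Finset Pt) (a₁ a₂ A : Pt) : Prop :=
  hBlockCells a₁ 3 ⊆ P ∧ vBlockCells a₂ 3 ⊆ P ∧ A ∈ P ∧
  A ∉ hBlockCells a₁ 3 ∪ vBlockCells a₂ 3 ∧
  vertsOfCells (hBlockCells a₁ 3) ∩ vertsOfCells (vBlockCells a₂ 3) = {(A.1, A.2 + 1)}

/-- An LD-horizontal skew tetromino of `P` (base point `p`): the cells
`p, p+(1,0), p+(1,1), p+(2,1)`. -/
def IsLDhTetromino (P : Finset Pt) (p : Pt) : Prop :=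
  p ∈ P ∧ (p.1 + 1, p.2) ∈ P ∧ (p.1 + 1, p.2 + 1) ∈ P ∧ (p.1 + 2, p.2 + 1) ∈ P

/-- An LD-vertical skew tetromino of `P` (base point `p`): the cells
`p, p+(0,1), p+(1,1), p+(1,2)`. -/
def IsLDvTetromino (P : Finset Pt) (p : Pt) : Prop :=
  p ∈ P ∧ (p.1, p.2 + 1) ∈ P ∧ (p.1 + 1, p.2 + 1) ∈ P ∧ (p.1 + 1, p.2 + 2) ∈ P

/-- An LD-horizontal skew hexomino of `P` (base point `p`): the cells
`p, p+(1,0), p+(2,0), p+(2,1), p+(3,1), p+(4,1)`. -/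
def IsLDhHexomino (P : Finset Pt) (p : Pt) : Prop :=
  p ∈ P ∧ (p.1 + 1, p.2) ∈ P ∧ (p.1 + 2, p.2) ∈ P ∧
  (p.1 + 2, p.2 + 1) ∈ P ∧ (p.1 + 3, p.2 + 1) ∈ P ∧ (p.1 + 4, p.2 + 1) ∈ P

/-- An LD-vertical skew hexomino of `P` (base point `p`): the cells
`p, p+(0,1), p+(0,2), p+(1,2), p+(1,3), p+(1,4)`. -/
def IsLDvHexomino (P : Finset Pt) (p : Pt) : Prop :=
  p ∈ P ∧ (p.1, p.2 + 1) ∈ P ∧ (p.1, p.2 + 2) ∈ P ∧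
  (p.1 + 1, p.2 + 2) ∈ P ∧ (p.1 + 1, p.2 + 3) ∈ P ∧ (p.1 + 1, p.2 + 4) ∈ P

/-- The total order `<¹` on `ℤ²`. -/
def lt1 (a b : Pt) : Prop := a.1 < b.1 ∨ (a.1 = b.1 ∧ a.2 < b.2)

/-- The P-order `<^Y` attached to a set `Y` of vertices. -/
def Ylt (Y : Set Pt) (a b : Pt) : Prop :=
  (a ∉ Y ∧ b ∈ Y) ∨ (a ∉ Y ∧ b ∉ Y ∧ lt1 a b) ∨ (a ∈ Y ∧ b ∈ Y ∧ lt1 a b)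


section AuxSPoly

variable {po : Pt → Pt → Prop}

lemma lexLt_irrefl (u : Pt →₀ ℕ) : ¬ lexLt po u u := by
  rintro ⟨w, hw, -⟩; exact lt_irrefl _ hw

lemma lexLt_trans (hpo : IsStrictTotalOrder Pt po) {u v z : Pt →₀ ℕ}
    (h1 : lexLt po u v) (h2 : lexLt po v z) : lexLt po u z := by
  obtain ⟨w1, hw1, H1⟩ := h1
  obtain ⟨w2, hw2, H2⟩ := h2
  rcases (haveI := hpo; trichotomous_of (r := po) w1 w2) with h | h | h
  · exact ⟨w2, by rw [H1 w2 h]; exact hw2,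
      fun w' hw' => (H1 w' (hpo.trans _ _ _ h hw')).trans (H2 w' hw')⟩
  · subst h
    exact ⟨w1, hw1.trans hw2, fun w' hw' => (H1 w' hw').trans (H2 w' hw')⟩
  · exact ⟨w1, by rw [← H2 w1 h]; exact hw1,
      fun w' hw' => (H1 w' hw').trans (H2 w' (hpo.trans _ _ _ h hw'))⟩

lemma lexLt_asymm (hpo : IsStrictTotalOrder Pt po) {u v : Pt →₀ ℕ}
    (h1 : lexLt po u v) (h2 : lexLt po v u) : False :=
  lexLt_irrefl u (lexLt_trans hpo h1 h2)

lemma lexLe_refl (u : Pt →₀ ℕ) : lexLe po u u := Or.inl rfl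

lemma lexLt_of_le_of_ne {u v : Pt →₀ ℕ} (h : lexLe po u v) (hne : u ≠ v) : lexLt po u v :=
  h.resolve_left hne

lemma lexLt_le_trans (hpo : IsStrictTotalOrder Pt po) {u v z : Pt →₀ ℕ}
    (h1 : lexLt po u v) (h2 : lexLe po v z) : lexLt po u z := by
  rcases h2 with rfl | h2
  · exact h1
  · exact lexLt_trans hpo h1 h2

lemma lexLe_trans (hpo : IsStrictTotalOrder Pt po) {u v z : Pt →₀ ℕ}
    (h1 : lexLe po u v) (h2 : lexLe po v z) : lexLe po u z := by
  rcases h1 with rfl | h1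
  · exact h2
  · exact Or.inr (lexLt_le_trans hpo h1 h2)

lemma lexLe_antisymm (hpo : IsStrictTotalOrder Pt po) {u v : Pt →₀ ℕ}
    (h1 : lexLe po u v) (h2 : lexLe po v u) : u = v := by
  rcases h1 with rfl | h1
  · rfl
  · rcases h2 with rfl | h2
    · rfl
    · exact absurd (lexLt_trans hpo h1 h2) (lexLt_irrefl u)

lemma lexLt_add_right {u v : Pt →₀ ℕ} (t : Pt →₀ ℕ) (h : lexLt po u v) :
    lexLt po (u + t) (v + t) := by
  obtain ⟨w, hw, H⟩ := h
  exact ⟨w, by simp only [Finsupp.add_apply]; omega,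
    fun w' hw' => by simp only [Finsupp.add_apply, H w' hw']⟩

lemma exists_po_max (hpo : IsStrictTotalOrder Pt po) (S : Finset Pt) (hS : S.Nonempty) :
    ∃ m ∈ S, ∀ x ∈ S, x ≠ m → po x m := by
  classical
  induction S using Finset.induction_on with
  | empty => exact absurd hS (by simp)
  | @insert p S hp ih =>
    rcases S.eq_empty_or_nonempty with rfl | hS'
    · exact ⟨p, by simp, by intro x hx hne; simp at hx; exact absurd hx hne⟩
    · obtain ⟨m, hm, hmax⟩ := ih hS'
      rcases (haveI := hpo; trichotomous_of (r := po) p m) with h | h | h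
      · refine ⟨m, by simp [hm], ?_⟩
        intro x hx hne
        rcases Finset.mem_insert.mp hx with rfl | hx
        · exact h
        · exact hmax x hx hne
      · subst h
        refine ⟨p, by simp, ?_⟩
        intro x hx hne
        rcases Finset.mem_insert.mp hx with rfl | hx
        · exact absurd rfl hne
        · exact hmax x hx hne
      · refine ⟨p, by simp, ?_⟩
        intro x hx hne
        rcases Finset.mem_insert.mp hx with rfl | hx
        · exact absurd rfl hne
        · rcases eq_or_ne x m with rfl | hxm
          · exact h
          · exact hpo.trans _ _ _ (hmax x hx hxm) h

lemma lexLt_total (hpo : IsStrictTotalOrder Pt po) (u v : Pt →₀ ℕ) :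
    u = v ∨ lexLt po u v ∨ lexLt po v u := by
  classical
  by_cases h : u = v
  · exact Or.inl h
  right
  set S : Finset Pt := (u.support ∪ v.support).filter (fun x => u x ≠ v x) with hSdef
  have hSmem : ∀ x, x ∈ S ↔ u x ≠ v x := by
    intro x
    simp only [hSdef, Finset.mem_filter, Finset.mem_union, Finsupp.mem_support_iff]
    constructor
    · exact fun h => h.2
    · intro hx
      refine ⟨?_, hx⟩
      by_contra hc
      push_neg at hc
      exact hx (hc.1.trans hc.2.symm)
  have hS : S.Nonempty := by
    by_contra hc
    rw [Finset.not_nonempty_iff_eq_empty] at hc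
    apply h
    ext x
    by_contra hx
    have : x ∈ S := (hSmem x).mpr hx
    simp [hc] at this
  obtain ⟨m, hm, hmax⟩ := exists_po_max hpo S hS
  have hmne : u m ≠ v m := (hSmem m).mp hm
  have hkey : ∀ w', po m w' → u w' = v w' := by
    intro w' hw'
    by_contra hc
    have hw'S : w' ∈ S := (hSmem w').mpr hc
    rcases eq_or_ne w' m with rfl | hne
    · exact hpo.irrefl _ hw'
    · exact hpo.irrefl _ (hpo.trans _ _ _ hw' (hmax w' hw'S hne))
  rcases lt_or_gt_of_ne hmne with hlt | hlt
  · exact Or.inl ⟨m, hlt, hkey⟩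
  · exact Or.inr ⟨m, hlt, fun w' hw' => (hkey w' hw').symm⟩


variable {K : Type*} [Field K]

/-- exponent of x_p x_q -/
noncomputable def mm (p q : Pt) : Pt →₀ ℕ := Finsupp.single p 1 + Finsupp.single q 1

lemma mm_apply (p q x : Pt) :
    mm p q x = (if p = x then 1 else 0) + (if q = x then 1 else 0) := by
  simp [mm, Finsupp.single_apply]

lemma mm_apply_zero {p q x : Pt} (h1 : p ≠ x) (h2 : q ≠ x) : mm p q x = 0 := by
  simp [mm_apply, h1, h2]

lemma mm_ne {s u t v : Pt} (h1 : s ≠ t) (h2 : s ≠ v) : mm s u ≠ mm t v := by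
  intro h
  have h3 : mm s u s = mm t v s := by rw [h]
  rw [mm_apply_zero (Ne.symm h1) (Ne.symm h2)] at h3
  simp [mm_apply] at h3

lemma X_mul_X (p q : Pt) : (X p * X q : MvPolynomial Pt K) = monomial (mm p q) 1 := by
  rw [X, X, monomial_mul, mm, mul_one]

lemma binom_eq (s u t v : Pt) :
    (X s * X u - X t * X v : MvPolynomial Pt K)
      = monomial (mm s u) 1 + monomial (mm t v) (-1) := by
  rw [X_mul_X, X_mul_X, sub_eq_add_neg, ← map_neg]

lemma binom_coeff_left {s u t v : Pt} (h : mm s u ≠ mm t v) :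
    (X s * X u - X t * X v : MvPolynomial Pt K).coeff (mm s u) = 1 := by
  rw [binom_eq]
  simp [coeff_monomial, h.symm]

lemma binom_coeff_right {s u t v : Pt} (h : mm s u ≠ mm t v) :
    (X s * X u - X t * X v : MvPolynomial Pt K).coeff (mm t v) = -1 := by
  rw [binom_eq]
  simp [coeff_monomial, h]

lemma binom_support {s u t v : Pt} (h : mm s u ≠ mm t v) :
    (X s * X u - X t * X v : MvPolynomial Pt K).support = {mm s u, mm t v} := by
  rw [binom_eq]
  ext e
  simp only [mem_support_iff, coeff_add, coeff_monomial, Finset.mem_insert,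
    Finset.mem_singleton]
  split_ifs with h1 h2 h2
  · exact absurd (h1.trans h2.symm) h
  · simp [h1.symm]
  · constructor
    · intro _; right; exact h2.symm
    · intro _; norm_num
  · constructor
    · intro hc; simp at hc
    · rintro (rfl | rfl)
      · exact absurd rfl h1
      · exact absurd rfl h2

lemma isLM_binom {s u t v : Pt} {m : Pt →₀ ℕ} (h : mm s u ≠ mm t v)
    (hlm : IsLM po (X s * X u - X t * X v : MvPolynomial Pt K) m) :
    (m = mm s u ∧ lexLe po (mm t v) (mm s u)) ∨
    (m = mm t v ∧ lexLe po (mm s u) (mm t v)) := by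
  obtain ⟨hmem, hmax⟩ := hlm
  rw [binom_support h] at hmem
  have h1 : mm s u ∈ (X s * X u - X t * X v : MvPolynomial Pt K).support := by
    rw [binom_support h]; simp
  have h2 : mm t v ∈ (X s * X u - X t * X v : MvPolynomial Pt K).support := by
    rw [binom_support h]; simp
  rcases Finset.mem_insert.mp hmem with rfl | hmem
  · exact Or.inl ⟨rfl, hmax _ h2⟩
  · rw [Finset.mem_singleton] at hmem
    subst hmem
    exact Or.inr ⟨rfl, hmax _ h1⟩

lemma isLM_unique (hpo : IsStrictTotalOrder Pt po) {f : MvPolynomial Pt K} {m m' : Pt →₀ ℕ}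
    (h1 : IsLM po f m) (h2 : IsLM po f m') : m = m' := by
  rcases h1 with ⟨h1a, h1b⟩
  rcases h2 with ⟨h2a, h2b⟩
  rcases h2b m h1a with rfl | hlt
  · rfl
  · rcases h1b m' h2a with rfl | hlt'
    · rfl
    · cases lexLt_irrefl (po := po) m (lexLt_trans hpo hlt hlt')

lemma reduces_zero (G : Set (MvPolynomial Pt K)) : ReducesToZero po G 0 :=
  ⟨∅, 0, by simp, by simp, by simp⟩

lemma reduces_single (G : Set (MvPolynomial Pt K)) (h q sp : MvPolynomial Pt K)
    (hG : h ∈ G) (hq : sp = q * h) : ReducesToZero po G sp := by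
  refine ⟨{h}, fun _ => q, by simpa, by simpa, ?_⟩
  intro g hg m hm
  rw [Finset.mem_singleton] at hg
  subst hg
  rw [← hq] at hm
  exact ⟨m, hm, Or.inl rfl⟩



lemma support_pair {m1 m2 : Pt →₀ ℕ} {c1 c2 : K} (h : m1 ≠ m2) (hc1 : c1 ≠ 0) (hc2 : c2 ≠ 0) :
    (monomial m1 c1 + monomial m2 c2 : MvPolynomial Pt K).support = {m1, m2} := by
  ext e
  simp only [mem_support_iff, coeff_add, coeff_monomial, Finset.mem_insert, Finset.mem_singleton]
  split_ifs with h1 h2 h2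
  · exact absurd (h1.trans h2.symm) h
  · constructor
    · intro _; left; exact h1.symm
    · intro _; simpa using hc1
  · constructor
    · intro _; right; exact h2.symm
    · intro _; simpa using hc2
  · constructor
    · intro hc; simp at hc
    · rintro (rfl | rfl)
      · exact absurd rfl h1
      · exact absurd rfl h2

lemma reduces_coprime (hpo : IsStrictTotalOrder Pt po) (G : Set (MvPolynomial Pt K))
    {f g sp : MvPolynomial Pt K} {m1 m2 n1 n2 : Pt →₀ ℕ} {c1 c2 d1 d2 : K}
    (hc1 : c1 * c1 = 1) (hd1 : d1 * d1 = 1) (hc2 : c2 ≠ 0) (hd2 : d2 ≠ 0)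
    (hf : f = monomial m1 c1 + monomial m2 c2)
    (hg : g = monomial n1 d1 + monomial n2 d2)
    (hm1n1 : m1 ≠ n1)
    (hdisj : ∀ x, m1 x = 0 ∨ n1 x = 0)
    (hfG : f ∈ G) (hgG : g ∈ G)
    (hltf : lexLt po m2 m1) (hltg : lexLt po n2 n1)
    (hsp : sp = monomial (m1 ⊔ n1 - m1) c1⁻¹ * f - monomial (m1 ⊔ n1 - n1) d1⁻¹ * g)
    (h0 : sp ≠ 0) : ReducesToZero po G sp := by
  classical
  have hc10 : c1 ≠ 0 := fun h => by simp [h] at hc1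
  have hd10 : d1 ≠ 0 := fun h => by simp [h] at hd1
  have hc1i : c1⁻¹ = c1 := inv_eq_of_mul_eq_one_right hc1
  have hd1i : d1⁻¹ = d1 := inv_eq_of_mul_eq_one_right hd1
  have hm12 : m1 ≠ m2 := by
    intro h; rw [h] at hltf; exact lexLt_irrefl _ hltf
  have hn12 : n1 ≠ n2 := by
    intro h; rw [h] at hltg; exact lexLt_irrefl _ hltg
  have hsup1 : m1 ⊔ n1 - m1 = n1 := by
    ext x
    rcases hdisj x with h | h <;>
      simp only [Finsupp.tsub_apply, Finsupp.sup_apply, h, show ∀ a b : ℕ, a ⊔ b = max a b from fun _ _ => rfl] <;> omega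
  have hsup2 : m1 ⊔ n1 - n1 = m1 := by
    ext x
    rcases hdisj x with h | h <;>
      simp only [Finsupp.tsub_apply, Finsupp.sup_apply, h, show ∀ a b : ℕ, a ⊔ b = max a b from fun _ _ => rfl] <;> omega
  have hspe : sp = monomial (n1 + m2) (c1 * c2) - monomial (m1 + n2) (d1 * d2) := by
    rw [hsp, hsup1, hsup2, hc1i, hd1i, hf, hg, mul_add, mul_add, monomial_mul, monomial_mul,
      monomial_mul, monomial_mul, hc1, hd1, add_comm m1 n1]
    ring
  have hfg : f ≠ g := by
    intro h
    have hs1 : m1 ∈ ({n1, n2} : Finset (Pt →₀ ℕ)) := by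
      rw [← support_pair hn12 hd10 hd2, ← hg, ← h, hf, support_pair hm12 hc10 hc2]
      simp
    have hm1n2 : m1 = n2 := by
      rcases Finset.mem_insert.mp hs1 with h' | h'
      · exact absurd h' hm1n1
      · simpa using h'
    have hs2 : n1 ∈ ({m1, m2} : Finset (Pt →₀ ℕ)) := by
      rw [← support_pair hm12 hc10 hc2, ← hf, h, hg, support_pair hn12 hd10 hd2]
      simp
    have hn1m2 : n1 = m2 := by
      rcases Finset.mem_insert.mp hs2 with h' | h'
      · exact absurd h'.symm hm1n1
      · simpa using h'
    rw [hm1n2, ← hn1m2] at hltf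
    exact lexLt_asymm hpo hltf hltg
  obtain ⟨mh, hmh, hb1, hb2⟩ :
      ∃ mh, IsLM po sp mh ∧ lexLe po (n1 + m2) mh ∧ lexLe po (m1 + n2) mh := by
    rcases lexLt_total hpo (n1 + m2) (m1 + n2) with heq | hlt | hlt
    · have hspm : sp = monomial (n1 + m2) (c1 * c2 - d1 * d2) := by
        rw [hspe, ← heq, ← map_sub]
      have he : c1 * c2 - d1 * d2 ≠ 0 := fun h => h0 (by rw [hspm, h, map_zero])
      refine ⟨n1 + m2, ⟨?_, ?_⟩, Or.inl rfl, Or.inl heq.symm⟩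
      · rw [hspm, mem_support_iff, coeff_monomial, if_pos rfl]; exact he
      · intro m' hm'
        rw [hspm, mem_support_iff, coeff_monomial] at hm'
        by_cases h : n1 + m2 = m'
        · rw [← h]; exact lexLe_refl _
        · simp [h] at hm'
    · have hne : n1 + m2 ≠ m1 + n2 := by
        intro h; rw [h] at hlt; exact lexLt_irrefl _ hlt
      refine ⟨m1 + n2, ⟨?_, ?_⟩, Or.inr hlt, lexLe_refl _⟩
      · rw [mem_support_iff, hspe, coeff_sub, coeff_monomial, coeff_monomial,
          if_neg hne, if_pos rfl]
        simpa using mul_ne_zero hd10 hd2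
      · intro m' hm'
        rw [hspe, mem_support_iff, coeff_sub, coeff_monomial, coeff_monomial] at hm'
        by_cases h1 : n1 + m2 = m'
        · rw [← h1]; exact Or.inr hlt
        · by_cases h2 : m1 + n2 = m'
          · rw [← h2]; exact lexLe_refl _
          · simp [h1, h2] at hm'
    · have hne : m1 + n2 ≠ n1 + m2 := by
        intro h; rw [h] at hlt; exact lexLt_irrefl _ hlt
      refine ⟨n1 + m2, ⟨?_, ?_⟩, lexLe_refl _, Or.inr hlt⟩
      · rw [mem_support_iff, hspe, coeff_sub, coeff_monomial, coeff_monomial,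
          if_neg hne, if_pos rfl]
        simpa using mul_ne_zero hc10 hc2
      · intro m' hm'
        rw [hspe, mem_support_iff, coeff_sub, coeff_monomial, coeff_monomial] at hm'
        by_cases h1 : n1 + m2 = m'
        · rw [← h1]; exact lexLe_refl _
        · by_cases h2 : m1 + n2 = m'
          · rw [← h2]; exact Or.inr hlt
          · simp [h1, h2] at hm'
  refine ⟨{f, g},
    fun p => if p = f then monomial n2 (-(c1 * d1 * d2)) else monomial m2 (c1 * d1 * c2),
    ?_, ?_, ?_⟩
  · intro p hp
    simp only [Finset.coe_insert, Finset.coe_singleton, Set.mem_insert_iff,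
      Set.mem_singleton_iff] at hp
    rcases hp with rfl | rfl
    · exact hfG
    · exact hgG
  · rw [Finset.sum_pair hfg]
    have hqf : (fun p => if p = f then (monomial n2) (-(c1 * d1 * d2))
        else (monomial m2) (c1 * d1 * c2)) f = monomial n2 (-(c1 * d1 * d2)) := by simp
    have hqg : (fun p => if p = f then (monomial n2) (-(c1 * d1 * d2))
        else (monomial m2) (c1 * d1 * c2)) g = monomial m2 (c1 * d1 * c2) := by
      simp [Ne.symm hfg]
    rw [hqf, hqg, hspe]
    nth_rewrite 1 [hf]
    nth_rewrite 1 [hg]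
    rw [mul_add, mul_add, monomial_mul, monomial_mul, monomial_mul, monomial_mul]
    have e1 : -(c1 * d1 * d2) * c1 = -(d1 * d2) := by linear_combination (-(d1 * d2)) * hc1
    have e2 : c1 * d1 * c2 * d1 = c1 * c2 := by linear_combination (c1 * c2) * hd1
    rw [e1, e2, add_comm n2 m1, add_comm n2 m2, add_comm m2 n1]
    have e4 : (monomial (m2 + n2)) (-(c1 * d1 * d2) * c2)
        = - monomial (m2 + n2) (c1 * d1 * c2 * d2) := by
      rw [← map_neg]; congr 1; ring
    rw [e4]
    simp only [map_neg]
    ring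
  · intro p hp m hm
    rcases Finset.mem_insert.mp hp with rfl | hp
    · have hq : (fun p_1 => if p_1 = p then (monomial n2) (-(c1 * d1 * d2))
          else (monomial m2) (c1 * d1 * c2)) p = monomial n2 (-(c1 * d1 * d2)) := by simp
      rw [hq] at hm
      have hmem := hm.1
      have hcases : m = n2 + m1 ∨ m = n2 + m2 := by
        rw [hf, mul_add, monomial_mul, monomial_mul, mem_support_iff, coeff_add,
          coeff_monomial, coeff_monomial] at hmem
        by_cases h1 : n2 + m1 = m
        · exact Or.inl h1.symm
        · by_cases h2 : n2 + m2 = m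
          · exact Or.inr h2.symm
          · simp [h1, h2] at hmem
      refine ⟨mh, hmh, ?_⟩
      rcases hcases with rfl | rfl
      · rw [add_comm n2 m1]; exact hb2
      · exact Or.inr (lexLt_le_trans hpo (lexLt_add_right m2 hltg) hb1)
    · rw [Finset.mem_singleton] at hp
      subst hp
      have hq : (fun p_1 => if p_1 = f then (monomial n2) (-(c1 * d1 * d2))
          else (monomial m2) (c1 * d1 * c2)) p = monomial m2 (c1 * d1 * c2) := by
        simp [Ne.symm hfg]
      rw [hq] at hm
      have hmem := hm.1
      have hcases : m = m2 + n1 ∨ m = m2 + n2 := by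
        rw [hg, mul_add, monomial_mul, monomial_mul, mem_support_iff, coeff_add,
          coeff_monomial, coeff_monomial] at hmem
        by_cases h1 : m2 + n1 = m
        · exact Or.inl h1.symm
        · by_cases h2 : m2 + n2 = m
          · exact Or.inr h2.symm
          · simp [h1, h2] at hmem
      refine ⟨mh, hmh, ?_⟩
      rcases hcases with rfl | rfl
      · rw [add_comm m2 n1]; exact hb1
      · exact Or.inr (lexLt_le_trans hpo (lexLt_add_right n2 hltf) hb2)



lemma monomial_single_one (p : Pt) : (monomial (Finsupp.single p 1) (1:K)) = X p := rfl

lemma monomial_single_negone (p : Pt) : (monomial (Finsupp.single p 1) (-1:K)) = - X p := by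
  rw [show (-1 : K) = -(1:K) by norm_num, map_neg, monomial_single_one]

lemma inv_negone : ((-1 : K))⁻¹ = -1 := by
  rw [inv_neg, inv_one]

lemma mm_sup_sub₁ {p q r : Pt} (hpq : p ≠ q) (hpr : p ≠ r) (hqr : q ≠ r) :
    mm p q ⊔ mm p r - mm p q = Finsupp.single r 1 := by
  ext x
  simp only [Finsupp.tsub_apply, Finsupp.sup_apply, mm_apply, Finsupp.single_apply, show ∀ a b : ℕ, a ⊔ b = max a b from fun _ _ => rfl]
  by_cases h1 : p = x <;> by_cases h2 : q = x <;> by_cases h3 : r = x <;>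
    first
      | exact absurd (h1.trans h2.symm) hpq
      | exact absurd (h1.trans h3.symm) hpr
      | exact absurd (h2.trans h3.symm) hqr
      | (simp only [h1, h2, h3, if_true, if_false,
            show ∀ a b : ℕ, a ⊔ b = max a b from fun _ _ => rfl]; omega)

lemma mm_sup_sub₂ {p q r : Pt} (hpq : p ≠ q) (hpr : p ≠ r) (hqr : q ≠ r) :
    mm p q ⊔ mm p r - mm p r = Finsupp.single q 1 := by
  rw [sup_comm]
  exact mm_sup_sub₁ hpr hpq (Ne.symm hqr)

lemma mm_disj {s u t z : Pt} (h1 : s ≠ t) (h2 : s ≠ z) (h3 : u ≠ t) (h4 : u ≠ z) :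
    ∀ x, mm s u x = 0 ∨ mm t z x = 0 := by
  intro x
  by_cases hx : s = x
  · subst hx
    exact Or.inr (mm_apply_zero (Ne.symm h1) (Ne.symm h2))
  · by_cases hx2 : u = x
    · subst hx2
      exact Or.inr (mm_apply_zero (Ne.symm h3) (Ne.symm h4))
    · exact Or.inl (mm_apply_zero hx hx2)

def AD6 (s t u v w z : Pt) : Prop :=
  s ≠ t ∧ s ≠ u ∧ s ≠ v ∧ s ≠ w ∧ s ≠ z ∧ t ≠ u ∧ t ≠ v ∧ t ≠ w ∧ t ≠ z ∧
  u ≠ v ∧ u ≠ w ∧ u ≠ z ∧ v ≠ w ∧ v ≠ z ∧ w ≠ z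

lemma shapeP (hpo : IsStrictTotalOrder Pt po) (G : Set (MvPolynomial Pt K))
    (s t u v w z : Pt) (hd : AD6 s t u v w z)
    (hfG : (X s * X u - X t * X v : MvPolynomial Pt K) ∈ G)
    (hgG : (X s * X w - X t * X z : MvPolynomial Pt K) ∈ G)
    (hB : (X w * X v - X u * X z : MvPolynomial Pt K) ∈ G ∨
          (X u * X z - X w * X v : MvPolynomial Pt K) ∈ G)
    (sp : MvPolynomial Pt K)
    (hsp : IsSPoly po (X s * X u - X t * X v) (X s * X w - X t * X z) sp)
    (h0 : sp ≠ 0) : ReducesToZero po G sp := by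
  obtain ⟨hst, hsu, hsv, hsw, hsz, htu, htv, htw, htz, huv, huw, huz, hvw, hvz, hwz⟩ := hd
  obtain ⟨mf, mg, hlmf, hlmg, hspeq⟩ := hsp
  have hnef : mm s u ≠ mm t v := mm_ne hst hsv
  have hneg : mm s w ≠ mm t z := mm_ne hst hsz
  rcases isLM_binom hnef hlmf with ⟨rfl, hlef⟩ | ⟨rfl, hlef⟩ <;>
    rcases isLM_binom hneg hlmg with ⟨rfl, hleg⟩ | ⟨rfl, hleg⟩
  · -- (mm s u, mm s w) : common variable s
    rw [binom_coeff_left hnef, binom_coeff_left hneg, mm_sup_sub₁ hsu hsw huw,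
      mm_sup_sub₂ hsu hsw huw, inv_one, monomial_single_one, monomial_single_one] at hspeq
    rcases hB with hB | hB
    · refine reduces_single G _ (-(X t)) sp hB ?_
      rw [hspeq]; ring
    · refine reduces_single G _ (X t) sp hB ?_
      rw [hspeq]; ring
  · -- (mm s u, mm t z) : coprime
    rw [binom_coeff_left hnef, binom_coeff_right hneg] at hspeq
    exact reduces_coprime (m1 := mm s u) (m2 := mm t v) (n1 := mm t z) (n2 := mm s w)
      (c1 := 1) (c2 := -1) (d1 := -1) (d2 := 1) hpo G
      (by norm_num) (by norm_num) (by norm_num) (by norm_num)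
      (binom_eq s u t v) (by rw [binom_eq]; ring)
      (mm_ne hst hsz) (mm_disj hst hsz htu.symm huz) hfG hgG
      (lexLt_of_le_of_ne hlef (Ne.symm hnef))
      (lexLt_of_le_of_ne hleg hneg) hspeq h0
  · -- (mm t v, mm s w) : coprime
    rw [binom_coeff_right hnef, binom_coeff_left hneg] at hspeq
    exact reduces_coprime (m1 := mm t v) (m2 := mm s u) (n1 := mm s w) (n2 := mm t z)
      (c1 := -1) (c2 := 1) (d1 := 1) (d2 := -1) hpo G
      (by norm_num) (by norm_num) (by norm_num) (by norm_num)
      (by rw [binom_eq]; ring) (binom_eq s w t z)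
      (mm_ne (Ne.symm hst) htw) (mm_disj (Ne.symm hst) htw (Ne.symm hsv) hvw) hfG hgG
      (lexLt_of_le_of_ne hlef hnef)
      (lexLt_of_le_of_ne hleg (Ne.symm hneg)) hspeq h0
  · -- (mm t v, mm t z) : common variable t
    rw [binom_coeff_right hnef, binom_coeff_right hneg, mm_sup_sub₁ htv htz hvz,
      mm_sup_sub₂ htv htz hvz, inv_negone, monomial_single_negone,
      monomial_single_negone] at hspeq
    rcases hB with hB | hB
    · refine reduces_single G _ (X s) sp hB ?_
      rw [hspeq]; ring
    · refine reduces_single G _ (-(X s)) sp hB ?_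
      rw [hspeq]; ring

lemma shapeC (hpo : IsStrictTotalOrder Pt po) (G : Set (MvPolynomial Pt K))
    (s t u v w z : Pt) (hd : AD6 s t u v w z)
    (hfG : (X s * X u - X t * X v : MvPolynomial Pt K) ∈ G)
    (hgG : (X t * X w - X s * X z : MvPolynomial Pt K) ∈ G)
    (hB : (X u * X w - X v * X z : MvPolynomial Pt K) ∈ G ∨
          (X v * X z - X u * X w : MvPolynomial Pt K) ∈ G)
    (sp : MvPolynomial Pt K)
    (hsp : IsSPoly po (X s * X u - X t * X v) (X t * X w - X s * X z) sp)
    (h0 : sp ≠ 0) : ReducesToZero po G sp := by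
  obtain ⟨hst, hsu, hsv, hsw, hsz, htu, htv, htw, htz, huv, huw, huz, hvw, hvz, hwz⟩ := hd
  obtain ⟨mf, mg, hlmf, hlmg, hspeq⟩ := hsp
  have hnef : mm s u ≠ mm t v := mm_ne hst hsv
  have hneg : mm t w ≠ mm s z := mm_ne (Ne.symm hst) htz
  rcases isLM_binom hnef hlmf with ⟨rfl, hlef⟩ | ⟨rfl, hlef⟩ <;>
    rcases isLM_binom hneg hlmg with ⟨rfl, hleg⟩ | ⟨rfl, hleg⟩
  · -- (mm s u, mm t w) : coprime
    rw [binom_coeff_left hnef, binom_coeff_left hneg] at hspeq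
    exact reduces_coprime (m1 := mm s u) (m2 := mm t v) (n1 := mm t w) (n2 := mm s z)
      (c1 := 1) (c2 := -1) (d1 := 1) (d2 := -1) hpo G
      (by norm_num) (by norm_num) (by norm_num) (by norm_num)
      (binom_eq s u t v) (binom_eq t w s z)
      (mm_ne hst hsw) (mm_disj hst hsw htu.symm huw) hfG hgG
      (lexLt_of_le_of_ne hlef (Ne.symm hnef))
      (lexLt_of_le_of_ne hleg (Ne.symm hneg)) hspeq h0
  · -- (mm s u, mm s z) : common variable s
    rw [binom_coeff_left hnef, binom_coeff_right hneg, mm_sup_sub₁ hsu hsz huz,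
      mm_sup_sub₂ hsu hsz huz, inv_one, inv_negone, monomial_single_one,
      monomial_single_negone] at hspeq
    rcases hB with hB | hB
    · refine reduces_single G _ (X t) sp hB ?_
      rw [hspeq]; ring
    · refine reduces_single G _ (-(X t)) sp hB ?_
      rw [hspeq]; ring
  · -- (mm t v, mm t w) : common variable t
    rw [binom_coeff_right hnef, binom_coeff_left hneg, mm_sup_sub₁ htv htw hvw,
      mm_sup_sub₂ htv htw hvw, inv_one, inv_negone, monomial_single_one,
      monomial_single_negone] at hspeq
    rcases hB with hB | hB
    · refine reduces_single G _ (-(X s)) sp hB ?_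
      rw [hspeq]; ring
    · refine reduces_single G _ (X s) sp hB ?_
      rw [hspeq]; ring
  · -- (mm t v, mm s z) : coprime
    rw [binom_coeff_right hnef, binom_coeff_right hneg] at hspeq
    exact reduces_coprime (m1 := mm t v) (m2 := mm s u) (n1 := mm s z) (n2 := mm t w)
      (c1 := -1) (c2 := 1) (d1 := -1) (d2 := 1) hpo G
      (by norm_num) (by norm_num) (by norm_num) (by norm_num)
      (by rw [binom_eq]; ring) (by rw [binom_eq]; ring)
      (mm_ne (Ne.symm hst) htz) (mm_disj (Ne.symm hst) htz (Ne.symm hsv) hvz) hfG hgG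
      (lexLt_of_le_of_ne hlef hnef)
      (lexLt_of_le_of_ne hleg hneg) hspeq h0


end AuxSPoly

set_option maxHeartbeats 2000000 in
/-- if the corner sets of two inner intervals share exactly two elements,
then the S-polynomial of the attached inner 2-minors reduces to 0 modulo the set of all
inner 2-minors, for every P-order. -/
theorem sPoly_reducesToZero_of_two_common_corners
    (K : Type*) [Field K] (P : Finset Pt) (hP : P.Nonempty)
    (a b α β : Pt)
    (hab : IsInnerInterval P a b) (hαβ : IsInnerInterval P α β)
    (hcard : (cornersOf a b ∩ cornersOf α β).card = 2)
    (po : Pt → Pt → Prop) (hpo : IsStrictTotalOrder Pt po)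
    (sp : MvPolynomial Pt K)
    (hsp : IsSPoly po (innerMinor K a b) (innerMinor K α β) sp) :
    ReducesToZero po (minorsSet K P) sp := by
  classical
  by_cases h0 : sp = 0
  · rw [h0]; exact reduces_zero _
  obtain ⟨a1, a2⟩ := a
  obtain ⟨b1, b2⟩ := b
  obtain ⟨α1, α2⟩ := α
  obtain ⟨β1, β2⟩ := β
  have hab1 : a1 < b1 := hab.1
  have hab2 : a2 < b2 := hab.2.1
  have hαβ1 : α1 < β1 := hαβ.1
  have hαβ2 : α2 < β2 := hαβ.2.1
  have h2 : 1 < (cornersOf (a1, a2) (b1, b2) ∩ cornersOf (α1, α2) (β1, β2)).card := by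
    rw [hcard]; norm_num
  obtain ⟨s, hs, t, ht, hst⟩ := Finset.one_lt_card.mp h2
  obtain ⟨s1, s2⟩ := s
  obtain ⟨t1, t2⟩ := t
  rw [Finset.mem_inter] at hs ht
  have hsf := hs.1
  have hsg := hs.2
  have htf := ht.1
  have htg := ht.2
  simp only [cornersOf, Finset.mem_insert, Finset.mem_singleton, Prod.mk.injEq] at hsf hsg htf htg
  have hstne : ¬ (s1 = t1 ∧ s2 = t2) := by
    intro h
    exact hst (by simp [Prod.ext_iff, h.1, h.2])
  have hcl : (a2 = α2 ∧ a1 = β1 ∧ b2 = β2) ∨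
      (b1 = α1 ∧ a2 = α2 ∧ b2 = β2) ∨
      (a1 = α1 ∧ b1 = β1 ∧ a2 = β2) ∨
      (a1 = α1 ∧ b2 = α2 ∧ b1 = β1) ∨
      (a1 = α1 ∧ a2 = α2 ∧ b2 = β2) ∨
      (b1 = β1 ∧ a2 = α2 ∧ b2 = β2) ∨
      (a1 = α1 ∧ a2 = α2 ∧ b1 = β1) ∨
      (a1 = α1 ∧ b1 = β1 ∧ b2 = β2) := by
    clear hsp h0 hab hαβ hcard hP hpo h2 hs ht hst
    rcases hsf with h1 | h1 | h1 | h1 <;> rcases htf with h2 | h2 | h2 | h2 <;>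
      rcases hsg with h3 | h3 | h3 | h3 <;> rcases htg with h4 | h4 | h4 | h4 <;>
      first
        | (exfalso; omega)
        | (refine Or.inl ?_; omega)
        | (refine Or.inr (Or.inl ?_) ; omega)
        | (refine Or.inr (Or.inr (Or.inl ?_)) ; omega)
        | (refine Or.inr (Or.inr (Or.inr (Or.inl ?_))) ; omega)
        | (refine Or.inr (Or.inr (Or.inr (Or.inr (Or.inl ?_)))) ; omega)
        | (refine Or.inr (Or.inr (Or.inr (Or.inr (Or.inr (Or.inl ?_))))) ; omega)
        | (refine Or.inr (Or.inr (Or.inr (Or.inr (Or.inr (Or.inr (Or.inl ?_)))))) ; omega)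
        | (refine Or.inr (Or.inr (Or.inr (Or.inr (Or.inr (Or.inr (Or.inr ?_)))))) ; omega)
  clear hsf hsg htf htg hstne hst h2
  rcases hcl with hcl | hcl | hcl | hcl | hcl | hcl | hcl | hcl
  · -- C1 left-adjacent
    obtain ⟨e1, e2, e3⟩ := hcl
    subst e1
    subst e2
    subst e3
    have heqf : innerMinor K (a1, a2) (b1, b2) = (X (a1, a2) * X (b1, b2) - X (a1, b2) * X (b1, a2) : MvPolynomial Pt K) := by
      show (X (a1, a2) * X (b1, b2) - X (a1, b2) * X (b1, a2) : MvPolynomial Pt K) = _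
      ring
    have heqg : innerMinor K (α1, a2) (a1, b2) = (X (a1, b2) * X (α1, a2) - X (a1, a2) * X (α1, b2) : MvPolynomial Pt K) := by
      show (X (α1, a2) * X (a1, b2) - X (α1, b2) * X (a1, a2) : MvPolynomial Pt K) = _
      ring
    rw [heqf, heqg] at hsp
    refine shapeC hpo _ (a1, a2) (a1, b2) (b1, b2) (b1, a2) (α1, a2) (α1, b2) ?_ ?_ ?_ ?_ sp hsp h0
    · simp only [AD6, ne_eq, Prod.mk.injEq, not_and]
      constructorm* _ ∧ _ <;> omega
    · rw [← heqf]
      exact ⟨_, _, hab, rfl⟩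
    · rw [← heqg]
      exact ⟨_, _, hαβ, rfl⟩
    · have hBm : (X (b1, b2) * X (α1, a2) - X (b1, a2) * X (α1, b2) : MvPolynomial Pt K) = innerMinor K (α1, a2) (b1, b2) := by
        show _ = (X (α1, a2) * X (b1, b2) - X (α1, b2) * X (b1, a2) : MvPolynomial Pt K)
        ring
      have hinner : IsInnerInterval P (α1, a2) (b1, b2) := by
        refine ⟨show α1 < b1 by omega, show a2 < b2 by omega, ?_⟩
        intro c hc1 hc2 hc3 hc4
        have hc1' : α1 ≤ c.1 := hc1
        have hc2' : c.1 < b1 := hc2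
        have hc3' : a2 ≤ c.2 := hc3
        have hc4' : c.2 < b2 := hc4
        by_cases hsplit : c.1 < a1
        · exact hαβ.2.2 c (show α1 ≤ c.1 by omega) (show c.1 < a1 by omega) (show a2 ≤ c.2 by omega) (show c.2 < b2 by omega)
        · exact hab.2.2 c (show a1 ≤ c.1 by omega) (show c.1 < b1 by omega) (show a2 ≤ c.2 by omega) (show c.2 < b2 by omega)
      exact Or.inl (by rw [hBm]; exact ⟨_, _, hinner, rfl⟩)
  · -- C2 right-adjacent
    obtain ⟨e1, e2, e3⟩ := hcl
    subst e1
    subst e2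
    subst e3
    have heqf : innerMinor K (a1, a2) (b1, b2) = (X (b1, b2) * X (a1, a2) - X (b1, a2) * X (a1, b2) : MvPolynomial Pt K) := by
      show (X (a1, a2) * X (b1, b2) - X (a1, b2) * X (b1, a2) : MvPolynomial Pt K) = _
      ring
    have heqg : innerMinor K (b1, a2) (β1, b2) = (X (b1, a2) * X (β1, b2) - X (b1, b2) * X (β1, a2) : MvPolynomial Pt K) := by
      show (X (b1, a2) * X (β1, b2) - X (b1, b2) * X (β1, a2) : MvPolynomial Pt K) = _
      ring
    rw [heqf, heqg] at hsp
    refine shapeC hpo _ (b1, b2) (b1, a2) (a1, a2) (a1, b2) (β1, b2) (β1, a2) ?_ ?_ ?_ ?_ sp hsp h0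
    · simp only [AD6, ne_eq, Prod.mk.injEq, not_and]
      constructorm* _ ∧ _ <;> omega
    · rw [← heqf]
      exact ⟨_, _, hab, rfl⟩
    · rw [← heqg]
      exact ⟨_, _, hαβ, rfl⟩
    · have hBm : (X (a1, a2) * X (β1, b2) - X (a1, b2) * X (β1, a2) : MvPolynomial Pt K) = innerMinor K (a1, a2) (β1, b2) := by
        show _ = (X (a1, a2) * X (β1, b2) - X (a1, b2) * X (β1, a2) : MvPolynomial Pt K)
        ring
      have hinner : IsInnerInterval P (a1, a2) (β1, b2) := by
        refine ⟨show a1 < β1 by omega, show a2 < b2 by omega, ?_⟩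
        intro c hc1 hc2 hc3 hc4
        have hc1' : a1 ≤ c.1 := hc1
        have hc2' : c.1 < β1 := hc2
        have hc3' : a2 ≤ c.2 := hc3
        have hc4' : c.2 < b2 := hc4
        by_cases hsplit : c.1 < b1
        · exact hab.2.2 c (show a1 ≤ c.1 by omega) (show c.1 < b1 by omega) (show a2 ≤ c.2 by omega) (show c.2 < b2 by omega)
        · exact hαβ.2.2 c (show b1 ≤ c.1 by omega) (show c.1 < β1 by omega) (show a2 ≤ c.2 by omega) (show c.2 < b2 by omega)
      exact Or.inl (by rw [hBm]; exact ⟨_, _, hinner, rfl⟩)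
  · -- C3 below-adjacent
    obtain ⟨e1, e2, e3⟩ := hcl
    subst e1
    subst e2
    subst e3
    have heqf : innerMinor K (a1, a2) (b1, b2) = (X (a1, a2) * X (b1, b2) - X (b1, a2) * X (a1, b2) : MvPolynomial Pt K) := by
      show (X (a1, a2) * X (b1, b2) - X (a1, b2) * X (b1, a2) : MvPolynomial Pt K) = _
      ring
    have heqg : innerMinor K (a1, α2) (b1, a2) = (X (b1, a2) * X (a1, α2) - X (a1, a2) * X (b1, α2) : MvPolynomial Pt K) := by
      show (X (a1, α2) * X (b1, a2) - X (a1, a2) * X (b1, α2) : MvPolynomial Pt K) = _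
      ring
    rw [heqf, heqg] at hsp
    refine shapeC hpo _ (a1, a2) (b1, a2) (b1, b2) (a1, b2) (a1, α2) (b1, α2) ?_ ?_ ?_ ?_ sp hsp h0
    · simp only [AD6, ne_eq, Prod.mk.injEq, not_and]
      constructorm* _ ∧ _ <;> omega
    · rw [← heqf]
      exact ⟨_, _, hab, rfl⟩
    · rw [← heqg]
      exact ⟨_, _, hαβ, rfl⟩
    · have hBm : (X (b1, b2) * X (a1, α2) - X (a1, b2) * X (b1, α2) : MvPolynomial Pt K) = innerMinor K (a1, α2) (b1, b2) := by
        show _ = (X (a1, α2) * X (b1, b2) - X (a1, b2) * X (b1, α2) : MvPolynomial Pt K)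
        ring
      have hinner : IsInnerInterval P (a1, α2) (b1, b2) := by
        refine ⟨show a1 < b1 by omega, show α2 < b2 by omega, ?_⟩
        intro c hc1 hc2 hc3 hc4
        have hc1' : a1 ≤ c.1 := hc1
        have hc2' : c.1 < b1 := hc2
        have hc3' : α2 ≤ c.2 := hc3
        have hc4' : c.2 < b2 := hc4
        by_cases hsplit : c.2 < a2
        · exact hαβ.2.2 c (show a1 ≤ c.1 by omega) (show c.1 < b1 by omega) (show α2 ≤ c.2 by omega) (show c.2 < a2 by omega)
        · exact hab.2.2 c (show a1 ≤ c.1 by omega) (show c.1 < b1 by omega) (show a2 ≤ c.2 by omega) (show c.2 < b2 by omega)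
      exact Or.inl (by rw [hBm]; exact ⟨_, _, hinner, rfl⟩)
  · -- C4 above-adjacent
    obtain ⟨e1, e2, e3⟩ := hcl
    subst e1
    subst e2
    subst e3
    have heqf : innerMinor K (a1, a2) (b1, b2) = (X (b1, b2) * X (a1, a2) - X (a1, b2) * X (b1, a2) : MvPolynomial Pt K) := by
      show (X (a1, a2) * X (b1, b2) - X (a1, b2) * X (b1, a2) : MvPolynomial Pt K) = _
      ring
    have heqg : innerMinor K (a1, b2) (b1, β2) = (X (a1, b2) * X (b1, β2) - X (b1, b2) * X (a1, β2) : MvPolynomial Pt K) := by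
      show (X (a1, b2) * X (b1, β2) - X (a1, β2) * X (b1, b2) : MvPolynomial Pt K) = _
      ring
    rw [heqf, heqg] at hsp
    refine shapeC hpo _ (b1, b2) (a1, b2) (a1, a2) (b1, a2) (b1, β2) (a1, β2) ?_ ?_ ?_ ?_ sp hsp h0
    · simp only [AD6, ne_eq, Prod.mk.injEq, not_and]
      constructorm* _ ∧ _ <;> omega
    · rw [← heqf]
      exact ⟨_, _, hab, rfl⟩
    · rw [← heqg]
      exact ⟨_, _, hαβ, rfl⟩
    · have hBm : (X (a1, a2) * X (b1, β2) - X (b1, a2) * X (a1, β2) : MvPolynomial Pt K) = innerMinor K (a1, a2) (b1, β2) := by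
        show _ = (X (a1, a2) * X (b1, β2) - X (a1, β2) * X (b1, a2) : MvPolynomial Pt K)
        ring
      have hinner : IsInnerInterval P (a1, a2) (b1, β2) := by
        refine ⟨show a1 < b1 by omega, show a2 < β2 by omega, ?_⟩
        intro c hc1 hc2 hc3 hc4
        have hc1' : a1 ≤ c.1 := hc1
        have hc2' : c.1 < b1 := hc2
        have hc3' : a2 ≤ c.2 := hc3
        have hc4' : c.2 < β2 := hc4
        by_cases hsplit : c.2 < b2
        · exact hab.2.2 c (show a1 ≤ c.1 by omega) (show c.1 < b1 by omega) (show a2 ≤ c.2 by omega) (show c.2 < b2 by omega)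
        · exact hαβ.2.2 c (show a1 ≤ c.1 by omega) (show c.1 < b1 by omega) (show b2 ≤ c.2 by omega) (show c.2 < β2 by omega)
      exact Or.inl (by rw [hBm]; exact ⟨_, _, hinner, rfl⟩)
  · -- C5 h-nested-left
    obtain ⟨e1, e2, e3⟩ := hcl
    subst e1
    subst e2
    subst e3
    rcases lt_trichotomy b1 β1 with hlt | heq | hlt
    · have heqf : innerMinor K (a1, a2) (b1, b2) = (X (a1, a2) * X (b1, b2) - X (a1, b2) * X (b1, a2) : MvPolynomial Pt K) := by
        show (X (a1, a2) * X (b1, b2) - X (a1, b2) * X (b1, a2) : MvPolynomial Pt K) = _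
        ring
      have heqg : innerMinor K (a1, a2) (β1, b2) = (X (a1, a2) * X (β1, b2) - X (a1, b2) * X (β1, a2) : MvPolynomial Pt K) := by
        show (X (a1, a2) * X (β1, b2) - X (a1, b2) * X (β1, a2) : MvPolynomial Pt K) = _
        ring
      rw [heqf, heqg] at hsp
      refine shapeP hpo _ (a1, a2) (a1, b2) (b1, b2) (b1, a2) (β1, b2) (β1, a2) ?_ ?_ ?_ ?_ sp hsp h0
      · simp only [AD6, ne_eq, Prod.mk.injEq, not_and]
        constructorm* _ ∧ _ <;> omega
      · rw [← heqf]
        exact ⟨_, _, hab, rfl⟩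
      · rw [← heqg]
        exact ⟨_, _, hαβ, rfl⟩
      · have hBm : (X (β1, b2) * X (b1, a2) - X (b1, b2) * X (β1, a2) : MvPolynomial Pt K) = innerMinor K (b1, a2) (β1, b2) := by
          show _ = (X (b1, a2) * X (β1, b2) - X (b1, b2) * X (β1, a2) : MvPolynomial Pt K)
          ring
        have hinner : IsInnerInterval P (b1, a2) (β1, b2) := by
          refine ⟨show b1 < β1 by omega, show a2 < b2 by omega, ?_⟩
          intro c hc1 hc2 hc3 hc4
          have hc1' : b1 ≤ c.1 := hc1
          have hc2' : c.1 < β1 := hc2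
          have hc3' : a2 ≤ c.2 := hc3
          have hc4' : c.2 < b2 := hc4
          exact hαβ.2.2 c (show a1 ≤ c.1 by omega) (show c.1 < β1 by omega) (show a2 ≤ c.2 by omega) (show c.2 < b2 by omega)
        exact Or.inl (by rw [hBm]; exact ⟨_, _, hinner, rfl⟩)
    · subst heq
      obtain ⟨mf, mg, hlmf, hlmg, hspeq⟩ := hsp
      have hmmq := isLM_unique hpo hlmf hlmg
      subst hmmq
      rw [sub_self] at hspeq
      exact absurd hspeq h0
    · have heqf : innerMinor K (a1, a2) (b1, b2) = (X (a1, a2) * X (b1, b2) - X (a1, b2) * X (b1, a2) : MvPolynomial Pt K) := by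
        show (X (a1, a2) * X (b1, b2) - X (a1, b2) * X (b1, a2) : MvPolynomial Pt K) = _
        ring
      have heqg : innerMinor K (a1, a2) (β1, b2) = (X (a1, a2) * X (β1, b2) - X (a1, b2) * X (β1, a2) : MvPolynomial Pt K) := by
        show (X (a1, a2) * X (β1, b2) - X (a1, b2) * X (β1, a2) : MvPolynomial Pt K) = _
        ring
      rw [heqf, heqg] at hsp
      refine shapeP hpo _ (a1, a2) (a1, b2) (b1, b2) (b1, a2) (β1, b2) (β1, a2) ?_ ?_ ?_ ?_ sp hsp h0
      · simp only [AD6, ne_eq, Prod.mk.injEq, not_and]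
        constructorm* _ ∧ _ <;> omega
      · rw [← heqf]
        exact ⟨_, _, hab, rfl⟩
      · rw [← heqg]
        exact ⟨_, _, hαβ, rfl⟩
      · have hBm : (X (b1, b2) * X (β1, a2) - X (β1, b2) * X (b1, a2) : MvPolynomial Pt K) = innerMinor K (β1, a2) (b1, b2) := by
          show _ = (X (β1, a2) * X (b1, b2) - X (β1, b2) * X (b1, a2) : MvPolynomial Pt K)
          ring
        have hinner : IsInnerInterval P (β1, a2) (b1, b2) := by
          refine ⟨show β1 < b1 by omega, show a2 < b2 by omega, ?_⟩
          intro c hc1 hc2 hc3 hc4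
          have hc1' : β1 ≤ c.1 := hc1
          have hc2' : c.1 < b1 := hc2
          have hc3' : a2 ≤ c.2 := hc3
          have hc4' : c.2 < b2 := hc4
          exact hab.2.2 c (show a1 ≤ c.1 by omega) (show c.1 < b1 by omega) (show a2 ≤ c.2 by omega) (show c.2 < b2 by omega)
        exact Or.inr (by rw [hBm]; exact ⟨_, _, hinner, rfl⟩)
  · -- C6 h-nested-right
    obtain ⟨e1, e2, e3⟩ := hcl
    subst e1
    subst e2
    subst e3
    rcases lt_trichotomy a1 α1 with hlt | heq | hlt
    · have heqf : innerMinor K (a1, a2) (b1, b2) = (X (b1, b2) * X (a1, a2) - X (b1, a2) * X (a1, b2) : MvPolynomial Pt K) := by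
        show (X (a1, a2) * X (b1, b2) - X (a1, b2) * X (b1, a2) : MvPolynomial Pt K) = _
        ring
      have heqg : innerMinor K (α1, a2) (b1, b2) = (X (b1, b2) * X (α1, a2) - X (b1, a2) * X (α1, b2) : MvPolynomial Pt K) := by
        show (X (α1, a2) * X (b1, b2) - X (α1, b2) * X (b1, a2) : MvPolynomial Pt K) = _
        ring
      rw [heqf, heqg] at hsp
      refine shapeP hpo _ (b1, b2) (b1, a2) (a1, a2) (a1, b2) (α1, a2) (α1, b2) ?_ ?_ ?_ ?_ sp hsp h0
      · simp only [AD6, ne_eq, Prod.mk.injEq, not_and]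
        constructorm* _ ∧ _ <;> omega
      · rw [← heqf]
        exact ⟨_, _, hab, rfl⟩
      · rw [← heqg]
        exact ⟨_, _, hαβ, rfl⟩
      · have hBm : (X (a1, a2) * X (α1, b2) - X (α1, a2) * X (a1, b2) : MvPolynomial Pt K) = innerMinor K (a1, a2) (α1, b2) := by
          show _ = (X (a1, a2) * X (α1, b2) - X (a1, b2) * X (α1, a2) : MvPolynomial Pt K)
          ring
        have hinner : IsInnerInterval P (a1, a2) (α1, b2) := by
          refine ⟨show a1 < α1 by omega, show a2 < b2 by omega, ?_⟩
          intro c hc1 hc2 hc3 hc4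
          have hc1' : a1 ≤ c.1 := hc1
          have hc2' : c.1 < α1 := hc2
          have hc3' : a2 ≤ c.2 := hc3
          have hc4' : c.2 < b2 := hc4
          exact hab.2.2 c (show a1 ≤ c.1 by omega) (show c.1 < b1 by omega) (show a2 ≤ c.2 by omega) (show c.2 < b2 by omega)
        exact Or.inr (by rw [hBm]; exact ⟨_, _, hinner, rfl⟩)
    · subst heq
      obtain ⟨mf, mg, hlmf, hlmg, hspeq⟩ := hsp
      have hmmq := isLM_unique hpo hlmf hlmg
      subst hmmq
      rw [sub_self] at hspeq
      exact absurd hspeq h0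
    · have heqf : innerMinor K (a1, a2) (b1, b2) = (X (b1, b2) * X (a1, a2) - X (b1, a2) * X (a1, b2) : MvPolynomial Pt K) := by
        show (X (a1, a2) * X (b1, b2) - X (a1, b2) * X (b1, a2) : MvPolynomial Pt K) = _
        ring
      have heqg : innerMinor K (α1, a2) (b1, b2) = (X (b1, b2) * X (α1, a2) - X (b1, a2) * X (α1, b2) : MvPolynomial Pt K) := by
        show (X (α1, a2) * X (b1, b2) - X (α1, b2) * X (b1, a2) : MvPolynomial Pt K) = _
        ring
      rw [heqf, heqg] at hsp
      refine shapeP hpo _ (b1, b2) (b1, a2) (a1, a2) (a1, b2) (α1, a2) (α1, b2) ?_ ?_ ?_ ?_ sp hsp h0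
      · simp only [AD6, ne_eq, Prod.mk.injEq, not_and]
        constructorm* _ ∧ _ <;> omega
      · rw [← heqf]
        exact ⟨_, _, hab, rfl⟩
      · rw [← heqg]
        exact ⟨_, _, hαβ, rfl⟩
      · have hBm : (X (α1, a2) * X (a1, b2) - X (a1, a2) * X (α1, b2) : MvPolynomial Pt K) = innerMinor K (α1, a2) (a1, b2) := by
          show _ = (X (α1, a2) * X (a1, b2) - X (α1, b2) * X (a1, a2) : MvPolynomial Pt K)
          ring
        have hinner : IsInnerInterval P (α1, a2) (a1, b2) := by
          refine ⟨show α1 < a1 by omega, show a2 < b2 by omega, ?_⟩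
          intro c hc1 hc2 hc3 hc4
          have hc1' : α1 ≤ c.1 := hc1
          have hc2' : c.1 < a1 := hc2
          have hc3' : a2 ≤ c.2 := hc3
          have hc4' : c.2 < b2 := hc4
          exact hαβ.2.2 c (show α1 ≤ c.1 by omega) (show c.1 < b1 by omega) (show a2 ≤ c.2 by omega) (show c.2 < b2 by omega)
        exact Or.inl (by rw [hBm]; exact ⟨_, _, hinner, rfl⟩)
  · -- C7 v-nested-bottom
    obtain ⟨e1, e2, e3⟩ := hcl
    subst e1
    subst e2
    subst e3
    rcases lt_trichotomy b2 β2 with hlt | heq | hlt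
    · have heqf : innerMinor K (a1, a2) (b1, b2) = (X (a1, a2) * X (b1, b2) - X (b1, a2) * X (a1, b2) : MvPolynomial Pt K) := by
        show (X (a1, a2) * X (b1, b2) - X (a1, b2) * X (b1, a2) : MvPolynomial Pt K) = _
        ring
      have heqg : innerMinor K (a1, a2) (b1, β2) = (X (a1, a2) * X (b1, β2) - X (b1, a2) * X (a1, β2) : MvPolynomial Pt K) := by
        show (X (a1, a2) * X (b1, β2) - X (a1, β2) * X (b1, a2) : MvPolynomial Pt K) = _
        ring
      rw [heqf, heqg] at hsp
      refine shapeP hpo _ (a1, a2) (b1, a2) (b1, b2) (a1, b2) (b1, β2) (a1, β2) ?_ ?_ ?_ ?_ sp hsp h0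
      · simp only [AD6, ne_eq, Prod.mk.injEq, not_and]
        constructorm* _ ∧ _ <;> omega
      · rw [← heqf]
        exact ⟨_, _, hab, rfl⟩
      · rw [← heqg]
        exact ⟨_, _, hαβ, rfl⟩
      · have hBm : (X (b1, β2) * X (a1, b2) - X (b1, b2) * X (a1, β2) : MvPolynomial Pt K) = innerMinor K (a1, b2) (b1, β2) := by
          show _ = (X (a1, b2) * X (b1, β2) - X (a1, β2) * X (b1, b2) : MvPolynomial Pt K)
          ring
        have hinner : IsInnerInterval P (a1, b2) (b1, β2) := by
          refine ⟨show a1 < b1 by omega, show b2 < β2 by omega, ?_⟩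
          intro c hc1 hc2 hc3 hc4
          have hc1' : a1 ≤ c.1 := hc1
          have hc2' : c.1 < b1 := hc2
          have hc3' : b2 ≤ c.2 := hc3
          have hc4' : c.2 < β2 := hc4
          exact hαβ.2.2 c (show a1 ≤ c.1 by omega) (show c.1 < b1 by omega) (show a2 ≤ c.2 by omega) (show c.2 < β2 by omega)
        exact Or.inl (by rw [hBm]; exact ⟨_, _, hinner, rfl⟩)
    · subst heq
      obtain ⟨mf, mg, hlmf, hlmg, hspeq⟩ := hsp
      have hmmq := isLM_unique hpo hlmf hlmg
      subst hmmq
      rw [sub_self] at hspeq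
      exact absurd hspeq h0
    · have heqf : innerMinor K (a1, a2) (b1, b2) = (X (a1, a2) * X (b1, b2) - X (b1, a2) * X (a1, b2) : MvPolynomial Pt K) := by
        show (X (a1, a2) * X (b1, b2) - X (a1, b2) * X (b1, a2) : MvPolynomial Pt K) = _
        ring
      have heqg : innerMinor K (a1, a2) (b1, β2) = (X (a1, a2) * X (b1, β2) - X (b1, a2) * X (a1, β2) : MvPolynomial Pt K) := by
        show (X (a1, a2) * X (b1, β2) - X (a1, β2) * X (b1, a2) : MvPolynomial Pt K) = _
        ring
      rw [heqf, heqg] at hsp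
      refine shapeP hpo _ (a1, a2) (b1, a2) (b1, b2) (a1, b2) (b1, β2) (a1, β2) ?_ ?_ ?_ ?_ sp hsp h0
      · simp only [AD6, ne_eq, Prod.mk.injEq, not_and]
        constructorm* _ ∧ _ <;> omega
      · rw [← heqf]
        exact ⟨_, _, hab, rfl⟩
      · rw [← heqg]
        exact ⟨_, _, hαβ, rfl⟩
      · have hBm : (X (b1, b2) * X (a1, β2) - X (b1, β2) * X (a1, b2) : MvPolynomial Pt K) = innerMinor K (a1, β2) (b1, b2) := by
          show _ = (X (a1, β2) * X (b1, b2) - X (a1, b2) * X (b1, β2) : MvPolynomial Pt K)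
          ring
        have hinner : IsInnerInterval P (a1, β2) (b1, b2) := by
          refine ⟨show a1 < b1 by omega, show β2 < b2 by omega, ?_⟩
          intro c hc1 hc2 hc3 hc4
          have hc1' : a1 ≤ c.1 := hc1
          have hc2' : c.1 < b1 := hc2
          have hc3' : β2 ≤ c.2 := hc3
          have hc4' : c.2 < b2 := hc4
          exact hab.2.2 c (show a1 ≤ c.1 by omega) (show c.1 < b1 by omega) (show a2 ≤ c.2 by omega) (show c.2 < b2 by omega)
        exact Or.inr (by rw [hBm]; exact ⟨_, _, hinner, rfl⟩)
  · -- C8 v-nested-top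
    obtain ⟨e1, e2, e3⟩ := hcl
    subst e1
    subst e2
    subst e3
    rcases lt_trichotomy a2 α2 with hlt | heq | hlt
    · have heqf : innerMinor K (a1, a2) (b1, b2) = (X (b1, b2) * X (a1, a2) - X (a1, b2) * X (b1, a2) : MvPolynomial Pt K) := by
        show (X (a1, a2) * X (b1, b2) - X (a1, b2) * X (b1, a2) : MvPolynomial Pt K) = _
        ring
      have heqg : innerMinor K (a1, α2) (b1, b2) = (X (b1, b2) * X (a1, α2) - X (a1, b2) * X (b1, α2) : MvPolynomial Pt K) := by
        show (X (a1, α2) * X (b1, b2) - X (a1, b2) * X (b1, α2) : MvPolynomial Pt K) = _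
        ring
      rw [heqf, heqg] at hsp
      refine shapeP hpo _ (b1, b2) (a1, b2) (a1, a2) (b1, a2) (a1, α2) (b1, α2) ?_ ?_ ?_ ?_ sp hsp h0
      · simp only [AD6, ne_eq, Prod.mk.injEq, not_and]
        constructorm* _ ∧ _ <;> omega
      · rw [← heqf]
        exact ⟨_, _, hab, rfl⟩
      · rw [← heqg]
        exact ⟨_, _, hαβ, rfl⟩
      · have hBm : (X (a1, a2) * X (b1, α2) - X (a1, α2) * X (b1, a2) : MvPolynomial Pt K) = innerMinor K (a1, a2) (b1, α2) := by
          show _ = (X (a1, a2) * X (b1, α2) - X (a1, α2) * X (b1, a2) : MvPolynomial Pt K)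
          ring
        have hinner : IsInnerInterval P (a1, a2) (b1, α2) := by
          refine ⟨show a1 < b1 by omega, show a2 < α2 by omega, ?_⟩
          intro c hc1 hc2 hc3 hc4
          have hc1' : a1 ≤ c.1 := hc1
          have hc2' : c.1 < b1 := hc2
          have hc3' : a2 ≤ c.2 := hc3
          have hc4' : c.2 < α2 := hc4
          exact hab.2.2 c (show a1 ≤ c.1 by omega) (show c.1 < b1 by omega) (show a2 ≤ c.2 by omega) (show c.2 < b2 by omega)
        exact Or.inr (by rw [hBm]; exact ⟨_, _, hinner, rfl⟩)
    · subst heq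
      obtain ⟨mf, mg, hlmf, hlmg, hspeq⟩ := hsp
      have hmmq := isLM_unique hpo hlmf hlmg
      subst hmmq
      rw [sub_self] at hspeq
      exact absurd hspeq h0
    · have heqf : innerMinor K (a1, a2) (b1, b2) = (X (b1, b2) * X (a1, a2) - X (a1, b2) * X (b1, a2) : MvPolynomial Pt K) := by
        show (X (a1, a2) * X (b1, b2) - X (a1, b2) * X (b1, a2) : MvPolynomial Pt K) = _
        ring
      have heqg : innerMinor K (a1, α2) (b1, b2) = (X (b1, b2) * X (a1, α2) - X (a1, b2) * X (b1, α2) : MvPolynomial Pt K) := by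
        show (X (a1, α2) * X (b1, b2) - X (a1, b2) * X (b1, α2) : MvPolynomial Pt K) = _
        ring
      rw [heqf, heqg] at hsp
      refine shapeP hpo _ (b1, b2) (a1, b2) (a1, a2) (b1, a2) (a1, α2) (b1, α2) ?_ ?_ ?_ ?_ sp hsp h0
      · simp only [AD6, ne_eq, Prod.mk.injEq, not_and]
        constructorm* _ ∧ _ <;> omega
      · rw [← heqf]
        exact ⟨_, _, hab, rfl⟩
      · rw [← heqg]
        exact ⟨_, _, hαβ, rfl⟩
      · have hBm : (X (a1, α2) * X (b1, a2) - X (a1, a2) * X (b1, α2) : MvPolynomial Pt K) = innerMinor K (a1, α2) (b1, a2) := by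
          show _ = (X (a1, α2) * X (b1, a2) - X (a1, a2) * X (b1, α2) : MvPolynomial Pt K)
          ring
        have hinner : IsInnerInterval P (a1, α2) (b1, a2) := by
          refine ⟨show a1 < b1 by omega, show α2 < a2 by omega, ?_⟩
          intro c hc1 hc2 hc3 hc4
          have hc1' : a1 ≤ c.1 := hc1
          have hc2' : c.1 < b1 := hc2
          have hc3' : α2 ≤ c.2 := hc3
          have hc4' : c.2 < a2 := hc4
          exact hαβ.2.2 c (show a1 ≤ c.1 by omega) (show c.1 < b1 by omega) (show α2 ≤ c.2 by omega) (show c.2 < b2 by omega)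
        exact Or.inl (by rw [hBm]; exact ⟨_, _, hinner, rfl⟩)

end ClosedPathPaper
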